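/- Let k ≥ 2 and α ∈ ℝ^k. For each surjection σ : [k] → [m], define (σα)_j = Σ_{i : σ(i)=j} α_i. Let Λ_{k,m}(x, α) = Σ_{σ : [k]↠[m]} Σ_{j=1}^m (σα)_j. Then Λ_k(x, α) := Σ_{m=1}^k ((-1)^{m-1}/m) Λ_{k,m}(x, α) = 0. -/

import Mathlib

open Finset

private noncomputable def Ns (k m : ℕ) : ℕ := Nat.card {σ : Fin k → Fin m // Function.Surjective σ}

private lemma card_filter_surj (k m : ℕ)
    [inst : DecidablePred (Function.Surjective : (Fin k → Fin m) → Prop)] :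
    (Finset.univ.filter (fun σ : Fin k → Fin m => Function.Surjective σ)).card = Ns k m := by
  rw [Ns, Nat.card_eq_fintype_card, Fintype.card_subtype]

private lemma Ns_zero (k : ℕ) (hk : 1 ≤ k) : Ns k 0 = 0 := by
  haveI : IsEmpty (Fin k → Fin 0) := ⟨fun f => (f ⟨0, by omega⟩).elim0⟩
  simp [Ns]

private lemma Ns_gt (k : ℕ) : Ns k (k + 1) = 0 := by
  haveI : IsEmpty {σ : Fin k → Fin (k+1) // Function.Surjective σ} := by
    constructor
    rintro ⟨σ, hσ⟩
    have := Fintype.card_le_of_surjective σ hσ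
    simp at this
  simp [Ns]

private lemma Ns_rec (k m : ℕ) : Ns (k+1) (m+1) = (m+1) * (Ns k (m+1) + Ns k m) := by
  classical
  have hNs : ∀ a b : ℕ, Ns a b
      = (Finset.univ.filter (fun σ : Fin a → Fin b => Function.Surjective σ)).card :=
    fun a b => (card_filter_surj a b).symm
  -- characterize surjectivity of snoc
  have hsnoc : ∀ (f : Fin k → Fin (m+1)) (j : Fin (m+1)),
      Function.Surjective (Fin.snoc f j : Fin (k+1) → Fin (m+1)) ↔
        ∀ y, y = j ∨ ∃ x, f x = y := by
    intro f j
    constructor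
    · intro hs y
      obtain ⟨i, hi⟩ := hs y
      induction i using Fin.lastCases with
      | last => left; rw [← hi, Fin.snoc_last]
      | cast x => right; exact ⟨x, by rw [← hi, Fin.snoc_castSucc]⟩
    · intro h y
      rcases h y with h | ⟨x, hx⟩
      · exact ⟨Fin.last k, by rw [Fin.snoc_last, h]⟩
      · exact ⟨x.castSucc, by rw [Fin.snoc_castSucc, hx]⟩
  have hchar : ∀ (f : Fin k → Fin (m+1)) (j : Fin (m+1)),
      (Function.Surjective (Fin.snoc f j : Fin (k+1) → Fin (m+1)) ∧ ¬ Function.Surjective f)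
      ↔ ((∀ x, f x ≠ j) ∧ ∀ y, y ≠ j → ∃ x, f x = y) := by
    intro f j
    constructor
    · rintro ⟨hs, hns⟩
      refine ⟨fun x hx => hns fun y => ?_, fun y hy => ?_⟩
      · rcases (hsnoc f j).1 hs y with h | h
        · exact ⟨x, by rw [hx, h]⟩
        · exact h
      · rcases (hsnoc f j).1 hs y with h | h
        · exact absurd h hy
        · exact h
    · rintro ⟨h1, h2⟩
      constructor
      · rw [hsnoc]
        intro y
        by_cases hy : y = j
        · exact Or.inl hy
        · exact Or.inr (h2 y hy)
      · intro hf
        obtain ⟨x, hx⟩ := hf j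
        exact h1 x hx
  -- the key count for each j
  have key : ∀ j : Fin (m+1),
      ∑ f : Fin k → Fin (m+1),
        (if Function.Surjective (Fin.snoc f j : Fin (k+1) → Fin (m+1)) then (1:ℕ) else 0)
      = Ns k (m+1) + Ns k m := by
    intro j
    have split : ∀ f : Fin k → Fin (m+1),
        (if Function.Surjective (Fin.snoc f j : Fin (k+1) → Fin (m+1)) then (1:ℕ) else 0)
        = (if Function.Surjective f then 1 else 0)
          + (if (Function.Surjective (Fin.snoc f j : Fin (k+1) → Fin (m+1))
                ∧ ¬ Function.Surjective f) then 1 else 0) := by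
      intro f
      by_cases hf : Function.Surjective f
      · have hs : Function.Surjective (Fin.snoc f j : Fin (k+1) → Fin (m+1)) := by
          rw [hsnoc]; intro y; exact Or.inr (hf y)
        simp [hf, hs]
      · simp [hf]
    rw [Finset.sum_congr rfl (fun f _ => split f), Finset.sum_add_distrib]
    congr 1
    · rw [hNs, Finset.card_filter]
    · rw [hNs, ← Finset.card_filter]
      symm
      refine Finset.card_bij'
        (fun g _ => (j.succAbove ∘ g : Fin k → Fin (m+1)))
        (fun f hf x => ((finSuccEquiv' j) (f x)).get (by
          rw [Option.isSome_iff_ne_none]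
          intro hnone
          have hfx : f x = j := (finSuccEquiv' j).injective
            (by rw [hnone, finSuccEquiv'_at])
          have hf' := ((hchar f j).1 (Finset.mem_filter.1 hf).2).1 x
          exact hf' hfx)) ?_ ?_ ?_ ?_
      · intro g hg
        rw [Finset.mem_filter]
        refine ⟨Finset.mem_univ _, (hchar _ j).2 ⟨fun x => Fin.succAbove_ne j (g x), ?_⟩⟩
        intro y hy
        obtain ⟨z, hz⟩ := Fin.exists_succAbove_eq hy
        obtain ⟨x, hx⟩ := (Finset.mem_filter.1 hg).2 z
        exact ⟨x, by simp [Function.comp, hx, hz]⟩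
      · intro f hf
        rw [Finset.mem_filter]
        refine ⟨Finset.mem_univ _, fun z => ?_⟩
        obtain ⟨h1, h2⟩ := (hchar f j).1 (Finset.mem_filter.1 hf).2
        obtain ⟨x, hx⟩ := h2 (j.succAbove z) (Fin.succAbove_ne j z)
        refine ⟨x, ?_⟩
        have hsome : (finSuccEquiv' j) (f x) = some z := by
          rw [hx, finSuccEquiv'_succAbove]
        rw [← Option.some_inj, Option.some_get, hsome]
      · intro g hg
        funext x
        simp only [Function.comp]
        rw [← Option.some_inj, Option.some_get, finSuccEquiv'_succAbove]
      · intro f hf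
        funext x
        obtain ⟨h1, h2⟩ := (hchar f j).1 (Finset.mem_filter.1 hf).2
        simp only [Function.comp]
        rw [← finSuccEquiv'_symm_some, Option.some_get, Equiv.symm_apply_apply]
  -- assemble
  rw [hNs, Finset.card_filter]
  rw [Fintype.sum_equiv (Fin.snocEquiv (fun _ => Fin (m+1))).symm _
      (fun p : Fin (m+1) × (Fin k → Fin (m+1)) =>
        if Function.Surjective (Fin.snoc p.2 p.1 : Fin (k+1) → Fin (m+1)) then (1:ℕ) else 0)
      (fun σ => by simp [Fin.snocEquiv])]
  rw [Fintype.sum_prod_type]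
  rw [Finset.sum_congr rfl (fun j _ => key j)]
  simp [Finset.sum_const, mul_comm]

private lemma coeff_zero (K : ℕ) (hK : 1 ≤ K) :
    ∑ m ∈ Finset.Icc 1 (K+1), ((-1 : ℝ) ^ (m - 1) / m) * (Ns (K+1) m : ℝ) = 0 := by
  rw [← Finset.Ico_add_one_right_eq_Icc, Finset.sum_Ico_eq_sum_range]
  have hterm : ∀ i ∈ Finset.range (K + 1 + 1 - 1),
      ((-1 : ℝ) ^ (1 + i - 1) / (1 + i : ℕ)) * (Ns (K+1) (1+i) : ℝ)
      = ((-1:ℝ)^i * (Ns K i : ℝ)) - ((-1:ℝ)^(i+1) * (Ns K (i+1) : ℝ)) := by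
    intro i _
    have h1 : 1 + i - 1 = i := by omega
    have h2 : 1 + i = i + 1 := by omega
    rw [h1, h2, Ns_rec]
    have hne : ((i:ℝ) + 1) ≠ 0 := by positivity
    push_cast
    field_simp
    ring
  rw [Finset.sum_congr rfl hterm, Finset.sum_range_sub']
  rw [Ns_zero K hK, show K + 1 + 1 - 1 = K + 1 from rfl, Ns_gt K]
  simp

theorem linear_lambda_vanishes (k : ℕ) (hk : 2 ≤ k) (α : Fin k → ℝ) :
    ∑ m ∈ Finset.Icc 1 k, ((-1 : ℝ) ^ (m - 1) / m) *
      ∑ σ ∈ Finset.univ.filter (fun σ : Fin k → Fin m => Function.Surjective σ),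
        ∑ j : Fin m, ∑ i ∈ Finset.univ.filter (fun i => σ i = j), α i = 0 := by
  have step : ∀ m ∈ Finset.Icc 1 k,
      ((-1 : ℝ) ^ (m - 1) / m) *
        ∑ σ ∈ Finset.univ.filter (fun σ : Fin k → Fin m => Function.Surjective σ),
          ∑ j : Fin m, ∑ i ∈ Finset.univ.filter (fun i => σ i = j), α i
      = (((-1 : ℝ) ^ (m - 1) / m) * (Ns k m : ℝ)) * ∑ i, α i := by
    intro m _
    rw [Finset.sum_congr rfl (fun σ _ => Finset.sum_fiberwise Finset.univ σ α)]
    rw [Finset.sum_const, card_filter_surj, nsmul_eq_mul]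
    ring
  rw [Finset.sum_congr rfl step, ← Finset.sum_mul]
  obtain ⟨K, rfl⟩ : ∃ K, k = K + 1 := ⟨k - 1, by omega⟩
  rw [coeff_zero K (by omega), zero_mul]
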